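/- (Uniform second-derivative bound for a singular ODE.) Let r₀ > 0, f ∈ C⁰([0,r₀]) ∩ C¹((0,r₀]) and w ∈ C²([0,r₀]) satisfy w''(r) + (w(r)/r)' = f(r) for r ∈ (0,r₀]. Then |w''(r)| ≤ (4/3)·sup_{0 ≤ ρ ≤ r} |f(ρ)| for all r ∈ [0,r₀], and consequently |w'(r)| ≤ |w'(r₀)| + (4/3)·r₀·sup_{0 ≤ ρ ≤ r₀} |f(ρ)|. -/

import Mathlib

open Real

/-- **Uniform second-derivative bound for a singular ODE.** If `w ∈ C²([0,r₀])` solves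
`w'' + (w/r)' = f` on `(0,r₀]` with `f ∈ C⁰([0,r₀]) ∩ C¹((0,r₀])`, then
`|w''(r)| ≤ (4/3)·sup_{[0,r]} |f|`, and consequently
`|w'(r)| ≤ |w'(r₀)| + (4/3)·r₀·sup_{[0,r₀]} |f|`. -/
theorem singular_ode_second_derivative_bound (r₀ : ℝ) (hr₀ : 0 < r₀) (f w : ℝ → ℝ)
    (hf0 : ContinuousOn f (Set.Icc 0 r₀))
    (hf1 : ContDiffOn ℝ 1 f (Set.Ioc 0 r₀))
    (hw : ContDiffOn ℝ 2 w (Set.Icc 0 r₀))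
    (hode : ∀ r ∈ Set.Ioc (0:ℝ) r₀,
      derivWithin (fun s => derivWithin w (Set.Icc 0 r₀) s) (Set.Icc 0 r₀) r
        + derivWithin (fun s => w s / s) (Set.Icc 0 r₀) r = f r) :
    (∀ r ∈ Set.Icc (0:ℝ) r₀,
      |derivWithin (fun s => derivWithin w (Set.Icc 0 r₀) s) (Set.Icc 0 r₀) r|
        ≤ (4/3) * sSup ((fun ρ => |f ρ|) '' Set.Icc 0 r)) ∧
    (∀ r ∈ Set.Icc (0:ℝ) r₀,
      |derivWithin w (Set.Icc 0 r₀) r|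
        ≤ |derivWithin w (Set.Icc 0 r₀) r₀|
            + (4/3) * r₀ * sSup ((fun ρ => |f ρ|) '' Set.Icc 0 r₀)) := by
  set I := Set.Icc (0:ℝ) r₀ with hIdef
  set w1 := fun s => derivWithin w I s with hw1def
  set W2 := fun s => derivWithin w1 I s with hW2def
  have hw1app : ∀ s, derivWithin w I s = w1 s := fun s => rfl
  have hW2app : ∀ s, derivWithin w1 I s = W2 s := fun s => rfl
  have hUD : UniqueDiffOn ℝ I := uniqueDiffOn_Icc hr₀
  have hw1smooth : ContDiffOn ℝ 1 w1 I := hw.derivWithin hUD (by norm_num)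
  have hW2c : ContinuousOn W2 I := by
    have h : ContDiffOn ℝ 0 W2 I := hw1smooth.derivWithin hUD (by norm_num)
    exact h.continuousOn
  have hwd : DifferentiableOn ℝ w I := hw.differentiableOn (by norm_num)
  have hw1d : DifferentiableOn ℝ w1 I := hw1smooth.differentiableOn (by norm_num)
  have hw1c : ContinuousOn w1 I := hw1smooth.continuousOn
  have hwc : ContinuousOn w I := hw.continuousOn
  have h0I : (0:ℝ) ∈ I := Set.left_mem_Icc.2 hr₀.le
  have hr₀I : r₀ ∈ I := Set.right_mem_Icc.2 hr₀.le
  -- facts about M r := sSup ((fun ρ => |f ρ|) '' Set.Icc 0 r)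
  have hMbdd : ∀ r ∈ I, BddAbove ((fun ρ => |f ρ|) '' Set.Icc 0 r) := by
    intro r hr
    exact (isCompact_Icc.image_of_continuousOn
      ((hf0.mono (Set.Icc_subset_Icc le_rfl hr.2)).abs)).bddAbove
  have hMle : ∀ r ∈ I, ∀ s ∈ Set.Icc (0:ℝ) r, |f s| ≤ sSup ((fun ρ => |f ρ|) '' Set.Icc 0 r) :=
    fun r hr s hs => le_csSup (hMbdd r hr) ⟨s, hs, rfl⟩
  have hM0 : ∀ r ∈ I, 0 ≤ sSup ((fun ρ => |f ρ|) '' Set.Icc 0 r) := fun r hr =>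
    le_trans (abs_nonneg _) (hMle r hr 0 ⟨le_rfl, hr.1⟩)
  have hMmono : ∀ r ∈ I,
      sSup ((fun ρ => |f ρ|) '' Set.Icc 0 r) ≤ sSup ((fun ρ => |f ρ|) '' Set.Icc 0 r₀) := by
    intro r hr
    have hne : ((fun ρ => |f ρ|) '' Set.Icc 0 r).Nonempty := ⟨|f 0|, ⟨0, ⟨le_rfl, hr.1⟩, rfl⟩⟩
    exact csSup_le_csSup (hMbdd r₀ hr₀I) hne (Set.image_mono (Set.Icc_subset_Icc le_rfl hr.2))
  -- the ODE rewritten: W2 r = f r - (w1 r * r - w r)/r^2 on Ioc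
  have hW2eq : ∀ r ∈ Set.Ioc (0:ℝ) r₀, W2 r = f r - (w1 r * r - w r * 1) / r^2 := by
    intro r hr
    have hrI : r ∈ I := ⟨hr.1.le, hr.2⟩
    have hd : HasDerivWithinAt (fun s => w s / s) ((w1 r * r - w r * 1) / r^2) I r := by
      have := ((hwd r hrI).hasDerivWithinAt).div (hasDerivWithinAt_id r I) hr.1.ne'
      exact this
    have hG : derivWithin (fun s => w s / s) I r = (w1 r * r - w r * 1) / r^2 :=
      hd.derivWithin (hUD r hrI)
    have := hode r hr
    rw [hW2app, hG] at this
    linarith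
  -- derivative of h s = s^2 * w1 s - s * w s at interior points
  have hdh : ∀ x ∈ Set.Ioo (0:ℝ) r₀,
      HasDerivAt (fun s => s^2 * w1 s - s * w s) (x^2 * f x) x := by
    intro x hx
    have hxI : x ∈ I := ⟨hx.1.le, hx.2.le⟩
    have hN : I ∈ nhds x := Icc_mem_nhds hx.1 hx.2
    have hw' : HasDerivAt w (w1 x) x := ((hwd x hxI).hasDerivWithinAt).hasDerivAt hN
    have hw1' : HasDerivAt w1 (W2 x) x := ((hw1d x hxI).hasDerivWithinAt).hasDerivAt hN
    have h1 : HasDerivAt (fun s => s^2 * w1 s - s * w s)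
        ((2 * x ^ 1 * w1 x + x^2 * W2 x) - (1 * w x + x * w1 x)) x := by
      exact ((hasDerivAt_pow 2 x).mul hw1').sub ((hasDerivAt_id x).mul hw')
    have heq : (2 * x ^ 1 * w1 x + x^2 * W2 x) - (1 * w x + x * w1 x) = x^2 * f x := by
      have hfe := hW2eq x ⟨hx.1, hx.2.le⟩
      have hx0 : x ≠ 0 := hx.1.ne'
      rw [hfe]
      field_simp
      ring
    rw [heq] at h1; exact h1
  -- key integral bound
  have key : ∀ r ∈ Set.Ioc (0:ℝ) r₀,
      |r^2 * w1 r - r * w r| ≤ sSup ((fun ρ => |f ρ|) '' Set.Icc 0 r) * r^3 / 3 := by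
    intro r hr
    set Mr := sSup ((fun ρ => |f ρ|) '' Set.Icc 0 r) with hMr
    have hrI : r ∈ I := ⟨hr.1.le, hr.2⟩
    have hsub : Set.Icc (0:ℝ) r ⊆ I := Set.Icc_subset_Icc le_rfl hr.2
    have hcont : ContinuousOn (fun s => s^2 * w1 s - s * w s) (Set.Icc 0 r) := by
      apply ContinuousOn.sub
      · exact (continuousOn_pow 2).mul (hw1c.mono hsub)
      · exact continuousOn_id.mul (hwc.mono hsub)
    have hmono : ∀ (c : ℝ), (∀ x ∈ Set.Ioo (0:ℝ) r, c * (x^2 * f x) ≤ Mr * x^2) →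
        MonotoneOn (fun s => Mr * s^3 / 3 - c * (s^2 * w1 s - s * w s)) (Set.Icc 0 r) := by
      intro c hc
      apply monotoneOn_of_deriv_nonneg (convex_Icc 0 r)
      · exact (((continuousOn_pow 3).const_smul Mr).div_const 3).sub (hcont.const_smul c)
      · intro x hx
        rw [interior_Icc] at hx
        have hx' : x ∈ Set.Ioo (0:ℝ) r₀ := ⟨hx.1, lt_of_lt_of_le hx.2 hr.2⟩
        have hD : HasDerivAt (fun s => Mr * s^3 / 3 - c * (s^2 * w1 s - s * w s))
            (Mr * (3 * x ^ 2) / 3 - c * (x^2 * f x)) x :=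
          (((hasDerivAt_pow 3 x).const_mul Mr).div_const 3).sub ((hdh x hx').const_mul c)
        exact hD.differentiableAt.differentiableWithinAt
      · intro x hx
        rw [interior_Icc] at hx
        have hx' : x ∈ Set.Ioo (0:ℝ) r₀ := ⟨hx.1, lt_of_lt_of_le hx.2 hr.2⟩
        have hD : HasDerivAt (fun s => Mr * s^3 / 3 - c * (s^2 * w1 s - s * w s))
            (Mr * (3 * x ^ 2) / 3 - c * (x^2 * f x)) x :=
          (((hasDerivAt_pow 3 x).const_mul Mr).div_const 3).sub ((hdh x hx').const_mul c)
        rw [hD.deriv]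
        have := hc x hx
        nlinarith [sq_nonneg x]
    have hbound : ∀ x ∈ Set.Ioo (0:ℝ) r, |f x| ≤ Mr := fun x hx =>
      hMle r hrI x ⟨hx.1.le, hx.2.le⟩
    have h1 := hmono 1 (by
      intro x hx
      have h2 : (0:ℝ) ≤ x^2 := sq_nonneg x
      have := hbound x hx
      nlinarith [le_abs_self (f x)])
    have h2 := hmono (-1) (by
      intro x hx
      have h2 : (0:ℝ) ≤ x^2 := sq_nonneg x
      have := hbound x hx
      nlinarith [neg_abs_le (f x)])
    have e1 := h1 (Set.left_mem_Icc.2 hr.1.le) (Set.right_mem_Icc.2 hr.1.le) hr.1.le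
    have e2 := h2 (Set.left_mem_Icc.2 hr.1.le) (Set.right_mem_Icc.2 hr.1.le) hr.1.le
    simp only at e1 e2
    rw [abs_le]
    constructor <;> nlinarith [e1, e2]
  -- bound on W2 on Ioc
  have key2 : ∀ r ∈ Set.Ioc (0:ℝ) r₀,
      |W2 r| ≤ 4/3 * sSup ((fun ρ => |f ρ|) '' Set.Icc 0 r) := by
    intro r hr
    set Mr := sSup ((fun ρ => |f ρ|) '' Set.Icc 0 r) with hMr
    have hrI : r ∈ I := ⟨hr.1.le, hr.2⟩
    have hr0 : (0:ℝ) < r := hr.1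
    have hk := key r hr
    have hfe := hW2eq r hr
    have hfr : |f r| ≤ Mr := hMle r hrI r ⟨hr0.le, le_rfl⟩
    have hGval : (w1 r * r - w r * 1) / r^2 = (r^2 * w1 r - r * w r) / r^3 := by
      field_simp
    have hGb : |(w1 r * r - w r * 1) / r^2| ≤ Mr / 3 := by
      rw [hGval, abs_div, abs_of_pos (by positivity : (0:ℝ) < r^3), div_le_iff₀ (by positivity : (0:ℝ) < r^3)]
      calc |r^2 * w1 r - r * w r| ≤ Mr * r^3 / 3 := hk
        _ = Mr / 3 * r^3 := by ring
    rw [hfe]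
    calc |f r - (w1 r * r - w r * 1) / r^2| ≤ |f r| + |(w1 r * r - w r * 1) / r^2| :=
          abs_sub _ _
      _ ≤ Mr + Mr / 3 := add_le_add hfr hGb
      _ = 4/3 * Mr := by ring
  -- part 1
  have part1 : ∀ r ∈ I, |W2 r| ≤ 4/3 * sSup ((fun ρ => |f ρ|) '' Set.Icc 0 r) := by
    intro r hr
    rcases eq_or_lt_of_le hr.1 with h0 | h0
    · subst h0
      have hM00 : sSup ((fun ρ => |f ρ|) '' Set.Icc (0:ℝ) 0) = |f 0| := by
        rw [Set.Icc_self, Set.image_singleton, csSup_singleton]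
      rw [hM00]
      apply le_of_forall_pos_le_add
      intro ε hε
      have hε' : (0:ℝ) < 3 * ε / 4 := by linarith
      -- continuity of f at 0 within I
      have hcf : ContinuousWithinAt f I 0 := hf0 0 h0I
      rw [Metric.continuousWithinAt_iff] at hcf
      obtain ⟨δ, hδ, hδf⟩ := hcf (3 * ε / 4) hε'
      -- the filter
      have hne : (nhdsWithin (0:ℝ) (Set.Ioc 0 r₀)).NeBot := by
        rw [nhdsWithin_Ioc_eq_nhdsGT hr₀]
        infer_instance
      have htend : Filter.Tendsto (fun r => |W2 r|) (nhdsWithin (0:ℝ) (Set.Ioc 0 r₀))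
          (nhds |W2 0|) := by
        have : ContinuousWithinAt W2 I 0 := hW2c 0 h0I
        exact (continuous_abs.continuousAt.tendsto.comp
          (this.mono_left (nhdsWithin_mono 0 Set.Ioc_subset_Icc_self)))
      refine le_of_tendsto htend ?_
      have hsmall : ∀ᶠ r in nhdsWithin (0:ℝ) (Set.Ioc 0 r₀), r < δ := by
        apply Filter.Eventually.filter_mono nhdsWithin_le_nhds
        exact eventually_lt_nhds hδ
      filter_upwards [hsmall, self_mem_nhdsWithin] with r hrδ hrIoc
      have hrI : r ∈ I := ⟨hrIoc.1.le, hrIoc.2⟩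
      have hMr : sSup ((fun ρ => |f ρ|) '' Set.Icc 0 r) ≤ |f 0| + 3 * ε / 4 := by
        have hne2 : ((fun ρ => |f ρ|) '' Set.Icc 0 r).Nonempty :=
          ⟨|f 0|, ⟨0, ⟨le_rfl, hrIoc.1.le⟩, rfl⟩⟩
        refine csSup_le hne2 ?_
        rintro b ⟨s, hs, rfl⟩
        have hsI : s ∈ I := ⟨hs.1, le_trans hs.2 hrIoc.2⟩
        have hdist : dist s 0 < δ := by
          rw [Real.dist_eq, sub_zero, abs_of_nonneg hs.1]
          exact lt_of_le_of_lt hs.2 hrδ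
        have := hδf hsI hdist
        rw [Real.dist_eq] at this
        calc |f s| ≤ |f s - f 0| + |f 0| := by
              have := abs_sub_abs_le_abs_sub (f s) (f 0); linarith [abs_sub_abs_le_abs_sub (f s) (f 0)]
          _ ≤ |f 0| + 3 * ε / 4 := by linarith
      calc |W2 r| ≤ 4/3 * sSup ((fun ρ => |f ρ|) '' Set.Icc 0 r) := key2 r hrIoc
        _ ≤ 4/3 * (|f 0| + 3 * ε / 4) := by
            have := hM0 r hrI
            nlinarith
        _ = 4/3 * |f 0| + ε := by ring
    · exact key2 r ⟨h0, hr.2⟩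
  -- part 2
  have part2 : ∀ r ∈ I, |w1 r| ≤ |w1 r₀| + 4/3 * r₀ * sSup ((fun ρ => |f ρ|) '' Set.Icc 0 r₀) := by
    have M₀nn : 0 ≤ sSup ((fun ρ => |f ρ|) '' Set.Icc 0 r₀) := hM0 r₀ hr₀I
    set M₀ := sSup ((fun ρ => |f ρ|) '' Set.Icc 0 r₀) with hM₀
    have hmono : ∀ (c : ℝ), c = 1 ∨ c = -1 →
        MonotoneOn (fun s => 4/3 * M₀ * s - c * w1 s) I := by
      intro c hc
      apply monotoneOn_of_deriv_nonneg (convex_Icc 0 r₀)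
      · exact ((continuousOn_id.const_smul (4/3 * M₀)).sub (hw1c.const_smul c))
      · intro x hx
        replace hx : x ∈ Set.Ioo (0:ℝ) r₀ := by
          simpa [hIdef, interior_Icc] using hx
        have hxI : x ∈ I := ⟨hx.1.le, hx.2.le⟩
        have hN : I ∈ nhds x := Icc_mem_nhds hx.1 hx.2
        have hw1' : HasDerivAt w1 (W2 x) x := ((hw1d x hxI).hasDerivWithinAt).hasDerivAt hN
        have hD : HasDerivAt (fun s => 4/3 * M₀ * s - c * w1 s)
            (4/3 * M₀ * 1 - c * W2 x) x :=
          ((hasDerivAt_id x).const_mul (4/3 * M₀)).sub (hw1'.const_mul c)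
        exact hD.differentiableAt.differentiableWithinAt
      · intro x hx
        replace hx : x ∈ Set.Ioo (0:ℝ) r₀ := by
          simpa [hIdef, interior_Icc] using hx
        have hxI : x ∈ I := ⟨hx.1.le, hx.2.le⟩
        have hN : I ∈ nhds x := Icc_mem_nhds hx.1 hx.2
        have hw1' : HasDerivAt w1 (W2 x) x := ((hw1d x hxI).hasDerivWithinAt).hasDerivAt hN
        have hD : HasDerivAt (fun s => 4/3 * M₀ * s - c * w1 s)
            (4/3 * M₀ * 1 - c * W2 x) x :=
          ((hasDerivAt_id x).const_mul (4/3 * M₀)).sub (hw1'.const_mul c)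
        rw [hD.deriv]
        have hb : |W2 x| ≤ 4/3 * M₀ := by
          calc |W2 x| ≤ 4/3 * sSup ((fun ρ => |f ρ|) '' Set.Icc 0 x) :=
                key2 x ⟨hx.1, hx.2.le⟩
            _ ≤ 4/3 * M₀ := by
                have := hMmono x hxI; linarith
        rw [abs_le] at hb
        rcases hc with rfl | rfl <;> nlinarith
    intro r hr
    have e1 := hmono 1 (Or.inl rfl) hr hr₀I hr.2
    have e2 := hmono (-1) (Or.inr rfl) hr hr₀I hr.2
    simp only at e1 e2
    rw [abs_le]
    have habs := le_abs_self (w1 r₀)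
    have habs' := neg_abs_le (w1 r₀)
    constructor <;> nlinarith [hr.1, hr.2, M₀nn]
  refine ⟨?_, ?_⟩
  · intro r hr
    rw [hW2app]
    exact part1 r hr
  · intro r hr
    exact part2 r hr
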